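/- For q ∈ {2,3,4} and 0 < ε < 1, the function Q(ε) = −qε/(1+(q−1)ε) − log_q(1+(q−1)ε²) + 2·log_q(1+(q−1)ε) is strictly positive. -/

import Mathlib

/-- For `q ∈ {2,3,4}` and `0 < ε < 1`, the function
`Q(ε) = -qε/(1+(q-1)ε) - log_q(1+(q-1)ε²) + 2 log_q(1+(q-1)ε)` is strictly positive. -/
theorem stmt_17 (q ε : ℝ) (hq : q = 2 ∨ q = 3 ∨ q = 4) (hε0 : 0 < ε) (hε1 : ε < 1) :
    0 < -(q * ε) / (1 + (q - 1) * ε) - Real.logb q (1 + (q - 1) * ε ^ 2)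
        + 2 * Real.logb q (1 + (q - 1) * ε) := by
  have hq1 : (1:ℝ) < q := by rcases hq with h | h | h <;> norm_num [h]
  set a := q - 1 with ha
  set L := Real.log q with hL
  have ha0 : 0 < a := by simp only [ha]; linarith
  have hL0 : 0 < L := Real.log_pos hq1
  have hq0 : q ≠ 0 := by linarith
  -- P(0) > 0 : 2a - qL > 0
  have hP0 : 0 < 2 * a - q * L := by
    rcases hq with h | h | h
    · have := Real.log_two_lt_d9
      simp only [ha, hL, h]; nlinarith
    · have h3 : Real.log 3 < 4/3 := by
        rw [show (4/3:ℝ) = Real.log (Real.exp (4/3)) by rw [Real.log_exp]]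
        apply Real.log_lt_log (by norm_num)
        have h1 : Real.exp (4/3:ℝ) = Real.exp 1 * Real.exp (1/3) := by
          rw [← Real.exp_add]; norm_num
        have h2 : (4/3:ℝ) ≤ Real.exp (1/3) := by
          have := Real.add_one_le_exp (1/3:ℝ); linarith
        nlinarith [Real.exp_one_gt_d9, Real.exp_pos (1/3:ℝ)]
      simp only [ha, hL, h]; nlinarith
    · have h4 : Real.log 4 < 3/2 := by
        have h2 : Real.log 4 = 2 * Real.log 2 := by
          rw [show (4:ℝ) = 2^2 by norm_num, Real.log_pow]; norm_num
        nlinarith [Real.log_two_lt_d9]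
      simp only [ha, hL, h]; nlinarith
  -- the quadratic P and the function f
  set P : ℝ → ℝ := fun x => (2*a - q*L) + (2*a^2 - 2*a)*x - (2*a^2 + q*L*a)*x^2 with hP
  set f : ℝ → ℝ := fun x => 2 * Real.log (1 + a*x) - Real.log (1 + a*x^2)
      - L * (q*x/(1 + a*x)) with hf
  clear_value a L P f
  have hKpos : 0 < 2*a^2 + q*L*a := by positivity
  -- derivative of f
  have hderiv : ∀ x : ℝ, 0 ≤ x →
      HasDerivAt f (P x / ((1 + a*x)^2 * (1 + a*x^2))) x := by
    intro x hx
    have hu : 0 < 1 + a*x := by nlinarith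
    have hv : 0 < 1 + a*x^2 := by nlinarith
    have d1 : HasDerivAt (fun y : ℝ => 1 + a*y) a x := by
      simpa using ((hasDerivAt_id x).const_mul a).const_add 1
    have d2 : HasDerivAt (fun y : ℝ => 1 + a*y^2) (a*(2*x)) x := by
      simpa using (((hasDerivAt_pow 2 x)).const_mul a).const_add 1
    have h1 : HasDerivAt (fun y : ℝ => Real.log (1 + a*y)) (a / (1 + a*x)) x :=
      d1.log hu.ne'
    have h2 : HasDerivAt (fun y : ℝ => Real.log (1 + a*y^2)) (a*(2*x) / (1 + a*x^2)) x :=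
      d2.log hv.ne'
    have d3 : HasDerivAt (fun y : ℝ => q*y) q x := by
      simpa using (hasDerivAt_id x).const_mul q
    have h3 : HasDerivAt (fun y : ℝ => q*y/(1 + a*y))
        ((q * (1 + a*x) - q*x*a) / (1 + a*x)^2) x := d3.div d1 hu.ne'
    have h := ((h1.const_mul 2).sub h2).sub (h3.const_mul L)
    convert h using 1
    · rfl
    · rfl
    · rw [hf]; rfl
    simp only [hP]
    field_simp
    ring
  have hcont : ∀ x : ℝ, 0 ≤ x → ContinuousAt f x := fun x hx => (hderiv x hx).continuousAt
  have hf0 : f 0 = 0 := by simp [hf]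
  have hf1 : f 1 = 0 := by
    have e : (1:ℝ) + a = q := by rw [ha]; ring
    simp only [hf, mul_one, one_pow, e, div_self hq0, hL]
    ring
  -- positivity of f on (0,1)
  have hfε : 0 < f ε := by
    rcases le_or_gt (P ε) 0 with hPε | hPε
    · -- f strictly decreasing on [ε,1], f ε > f 1 = 0
      have hanti : StrictAntiOn f (Set.Icc ε 1) := by
        apply strictAntiOn_of_deriv_neg (convex_Icc ε 1)
        · exact fun x hx => (hcont x (le_trans hε0.le hx.1)).continuousWithinAt
        · intro x hx
          rw [interior_Icc] at hx
          have hx0 : 0 < x := lt_trans hε0 hx.1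
          rw [(hderiv x hx0.le).deriv]
          have hu : 0 < 1 + a*x := by nlinarith
          have hv : 0 < 1 + a*x^2 := by nlinarith
          apply div_neg_of_neg_of_pos _ (by positivity)
          -- P x < 0 from identity x * P ε = ε * P x + (x-ε)*(P 0 + K x ε)
          have hid : x * P ε = ε * P x + (x - ε) * ((2*a - q*L) + (2*a^2 + q*L*a)*x*ε) := by
            simp only [hP]; ring
          nlinarith [mul_pos (sub_pos.2 hx.1) (by nlinarith [mul_pos (mul_pos hKpos hx0) hε0] :
            (0:ℝ) < (2*a - q*L) + (2*a^2 + q*L*a)*x*ε),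
            mul_nonpos_of_nonneg_of_nonpos hx0.le hPε]
      have := hanti (Set.left_mem_Icc.2 hε1.le) (Set.right_mem_Icc.2 hε1.le) hε1
      rw [hf1] at this; exact this
    · -- f strictly increasing on [0,ε], f ε > f 0 = 0
      have hmono : StrictMonoOn f (Set.Icc 0 ε) := by
        apply strictMonoOn_of_deriv_pos (convex_Icc 0 ε)
        · exact fun x hx => (hcont x hx.1).continuousWithinAt
        · intro x hx
          rw [interior_Icc] at hx
          rw [(hderiv x hx.1.le).deriv]
          have hu : 0 < 1 + a*x := by nlinarith [hx.1]
          have hv : 0 < 1 + a*x^2 := by nlinarith [hx.1]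
          apply div_pos _ (by positivity)
          have hid : ε * P x = x * P ε + (ε - x) * ((2*a - q*L) + (2*a^2 + q*L*a)*x*ε) := by
            simp only [hP]; ring
          nlinarith [mul_pos hx.1 hPε,
            mul_pos (sub_pos.2 hx.2) (by nlinarith [mul_pos (mul_pos hKpos hx.1) hε0] :
              (0:ℝ) < (2*a - q*L) + (2*a^2 + q*L*a)*x*ε)]
      have := hmono (Set.left_mem_Icc.2 hε0.le) (Set.right_mem_Icc.2 hε0.le) hε0
      rw [hf0] at this; exact this
  -- convert the goal
  have huε : 0 < 1 + a*ε := by nlinarith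
  have hgoal : -(q * ε) / (1 + a * ε) - Real.logb q (1 + a * ε ^ 2)
      + 2 * Real.logb q (1 + a * ε) = f ε / L := by
    have hlogb : ∀ y : ℝ, Real.logb q y = Real.log y / L := fun y => by
      rw [Real.logb, hL]
    rw [hlogb, hlogb]
    simp only [hf]
    field_simp
    ring
  rw [hgoal]
  exact div_pos hfε hL0
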